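/- A Heinlein wall of size r (for any positive integer r) has pathwidth at most 5. -/
import Mathlib


/-- Vertices of a Heinlein wall of size `r`: path vertices `u j i` (path `j`,
position `i`, both 0-based), bottleneck vertices `z t` (`t = 0, …, r`), and the
terminals `a`, `b`.  We write `c = z 0` and `d = z r`. -/
inductive HWVert (r : ℕ) where
  | u : Fin r → Fin (2 * r) → HWVert r
  | z : Fin (r + 1) → HWVert r
  | a : HWVert r
  | b : HWVert r
deriving DecidableEq

/-- The defining relation of the Heinlein wall (paper 1-based indices translated
to 0-based ones): `u j i — u j (i+1)`; `z t — u j i` for `i` even iff `t = j`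
and for `i` odd iff `t = j + 1`; `z t — z (t+1)`; `a — u j 0`; `b — u j (2r-1)`. -/
def HWRel (r : ℕ) : HWVert r → HWVert r → Prop := fun x y =>
  match x, y with
  | .u j i, .u j' i' => j = j' ∧ i'.val = i.val + 1
  | .z t, .u j i => (i.val % 2 = 0 ∧ t.val = j.val) ∨ (i.val % 2 = 1 ∧ t.val = j.val + 1)
  | .z t, .z t' => t'.val = t.val + 1
  | .a, .u _ i => i.val = 0
  | .b, .u _ i => i.val = 2 * r - 1
  | _, _ => False

lemma hwaux_lt {r w j m : ℕ} (hj : j < r) (hm : m < w) : w * j + m < r * w := by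
  calc w * j + m < w * j + w := by omega
    _ = w * (j+1) := by ring
    _ ≤ w * r := Nat.mul_le_mul_left _ hj
    _ = r * w := Nat.mul_comm _ _

lemma hwaux_div {w j m : ℕ} (hw : 0 < w) (hm : m < w) : (w * j + m) / w = j := by
  rw [Nat.mul_add_div hw, Nat.div_eq_of_lt hm]; omega

lemma hwaux_mod {w j m : ℕ} (hm : m < w) : (w * j + m) % w = m := by
  rw [Nat.mul_add_mod, Nat.mod_eq_of_lt hm]

/-- The Heinlein wall of size `r`. -/
def HW (r : ℕ) : SimpleGraph (HWVert r) := SimpleGraph.fromRel (HWRel r)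

/-- A Heinlein wall of size `r ≥ 1` has pathwidth at most `5`: it admits a path
decomposition all of whose bags have at most `5 + 1 = 6` vertices. -/
theorem heinleinWall_pathwidth_le_five (r : ℕ) (hr : 1 ≤ r) :
    ∃ (n : ℕ) (Bags : Fin (n + 1) → Finset (HWVert r)),
      (∀ v, ∃ i, v ∈ Bags i) ∧
      (∀ x y, (HW r).Adj x y → ∃ i, x ∈ Bags i ∧ y ∈ Bags i) ∧
      (∀ i j k : Fin (n + 1), i ≤ j → j ≤ k →
        ∀ v, v ∈ Bags i → v ∈ Bags k → v ∈ Bags j) ∧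
      (∀ i, (Bags i).card ≤ 5 + 1) := by
  classical
  set w : ℕ := 2 * r - 1 with hwdef
  have hw0 : 0 < w := by omega
  have hwr : w + 1 = 2 * r := by omega
  have hrw : 1 ≤ r * w := Nat.one_le_iff_ne_zero.2 (by positivity)
  set n : ℕ := r * w - 1 with hndef
  have hn1 : n + 1 = r * w := by omega
  have hklt : ∀ k : Fin (n + 1), (k : ℕ) < r * w := fun k => hn1 ▸ k.isLt
  have hdivlt : ∀ k : Fin (n + 1), (k : ℕ) / w < r := fun k =>
    (Nat.div_lt_iff_lt_mul hw0).2 (hklt k)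
  have hmodlt : ∀ k : Fin (n + 1), (k : ℕ) % w < w := fun _ => Nat.mod_lt _ hw0
  obtain ⟨B, hB⟩ : ∃ B : Fin (n + 1) → Finset (HWVert r), ∀ k, B k =
      { HWVert.a, HWVert.b,
        HWVert.z ⟨(k : ℕ) / w, by have := hdivlt k; omega⟩,
        HWVert.z ⟨(k : ℕ) / w + 1, by have := hdivlt k; omega⟩,
        HWVert.u ⟨(k : ℕ) / w, hdivlt k⟩ ⟨(k : ℕ) % w, by have := hmodlt k; omega⟩,
        HWVert.u ⟨(k : ℕ) / w, hdivlt k⟩ ⟨(k : ℕ) % w + 1, by have := hmodlt k; omega⟩ } :=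
    ⟨_, fun _ => rfl⟩
  -- membership characterizations
  have hmema : ∀ k, HWVert.a ∈ B k := by intro k; rw [hB]; simp
  have hmemb : ∀ k, HWVert.b ∈ B k := by intro k; rw [hB]; simp
  have hmemz : ∀ (k : Fin (n + 1)) (t : Fin (r + 1)),
      HWVert.z t ∈ B k ↔ (t.val = (k : ℕ) / w ∨ t.val = (k : ℕ) / w + 1) := by
    intro k t; rw [hB]; simp [Fin.ext_iff]
  have hmemu : ∀ (k : Fin (n + 1)) (j : Fin r) (i : Fin (2 * r)),
      HWVert.u j i ∈ B k ↔
        (j.val = (k : ℕ) / w ∧ (i.val = (k : ℕ) % w ∨ i.val = (k : ℕ) % w + 1)) := by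
    intro k j i; rw [hB]; simp [Fin.ext_iff]; tauto
  -- index constructor
  have hmk : ∀ (j m : ℕ), j < r → m < w → ∃ k : Fin (n + 1),
      (k : ℕ) / w = j ∧ (k : ℕ) % w = m := by
    intro j m hj hm
    refine ⟨⟨w * j + m, by rw [hn1]; exact hwaux_lt hj hm⟩, ?_, ?_⟩
    · exact hwaux_div hw0 hm
    · exact hwaux_mod hm
  -- every path vertex lies in a bag whose "column" is its path index
  have hufind : ∀ (j : Fin r) (i : Fin (2 * r)), ∃ k : Fin (n + 1),
      (k : ℕ) / w = j.val ∧ HWVert.u j i ∈ B k := by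
    intro j i
    rcases Nat.lt_or_ge i.val w with hi | hi
    · obtain ⟨k, hk1, hk2⟩ := hmk j.val i.val j.isLt hi
      exact ⟨k, hk1, (hmemu k j i).2 ⟨hk1.symm, Or.inl hk2.symm⟩⟩
    · have hiw : i.val = w := by have := i.isLt; omega
      obtain ⟨k, hk1, hk2⟩ := hmk j.val (w - 1) j.isLt (by omega)
      exact ⟨k, hk1, (hmemu k j i).2 ⟨hk1.symm, Or.inr (by omega)⟩⟩
  refine ⟨n, B, ?_, ?_, ?_, ?_⟩
  · -- cover
    intro v
    cases v with
    | a => exact ⟨0, hmema 0⟩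
    | b => exact ⟨0, hmemb 0⟩
    | z t =>
      rcases Nat.lt_or_ge t.val r with ht | ht
      · obtain ⟨k, hk1, _⟩ := hmk t.val 0 ht hw0
        exact ⟨k, (hmemz k t).2 (Or.inl hk1.symm)⟩
      · have htr : t.val = r := by have := t.isLt; omega
        obtain ⟨k, hk1, _⟩ := hmk (r - 1) 0 (by omega) hw0
        exact ⟨k, (hmemz k t).2 (Or.inr (by omega))⟩
    | u j i =>
      obtain ⟨k, _, hk⟩ := hufind j i
      exact ⟨k, hk⟩
  · -- edges
    suffices hs : ∀ x y, HWRel r x y → ∃ i, x ∈ B i ∧ y ∈ B i by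
      intro x y hadj
      rw [HW, SimpleGraph.fromRel_adj] at hadj
      rcases hadj.2 with h | h
      · exact hs x y h
      · obtain ⟨i, h1, h2⟩ := hs y x h
        exact ⟨i, h2, h1⟩
    intro x y h
    cases x with
    | u j i =>
      cases y with
      | u j' i' =>
        obtain ⟨rfl, hii⟩ : j = j' ∧ i'.val = i.val + 1 := h
        have hi : i.val < w := by have := i'.isLt; omega
        obtain ⟨k, hk1, hk2⟩ := hmk j.val i.val j.isLt hi
        refine ⟨k, (hmemu k j i).2 ⟨hk1.symm, Or.inl hk2.symm⟩,
          (hmemu k j i').2 ⟨hk1.symm, Or.inr (by omega)⟩⟩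
      | z t => exact absurd h (by simp [HWRel])
      | a => exact absurd h (by simp [HWRel])
      | b => exact absurd h (by simp [HWRel])
    | z t =>
      cases y with
      | u j i =>
        obtain ⟨k, hk1, hk2⟩ := hufind j i
        refine ⟨k, ?_, hk2⟩
        rcases h with ⟨_, ht⟩ | ⟨_, ht⟩
        · exact (hmemz k t).2 (Or.inl (by omega))
        · exact (hmemz k t).2 (Or.inr (by omega))
      | z t' =>
        have ht : t'.val = t.val + 1 := h
        have htr : t.val < r := by have := t'.isLt; omega
        obtain ⟨k, hk1, _⟩ := hmk t.val 0 htr hw0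
        exact ⟨k, (hmemz k t).2 (Or.inl hk1.symm),
          (hmemz k t').2 (Or.inr (by omega))⟩
      | a => exact absurd h (by simp [HWRel])
      | b => exact absurd h (by simp [HWRel])
    | a =>
      cases y with
      | u j i =>
        obtain ⟨k, _, hk2⟩ := hufind j i
        exact ⟨k, hmema k, hk2⟩
      | z t => exact absurd h (by simp [HWRel])
      | a => exact absurd h (by simp [HWRel])
      | b => exact absurd h (by simp [HWRel])
    | b =>
      cases y with
      | u j i =>
        obtain ⟨k, _, hk2⟩ := hufind j i
        exact ⟨k, hmemb k, hk2⟩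
      | z t => exact absurd h (by simp [HWRel])
      | a => exact absurd h (by simp [HWRel])
      | b => exact absurd h (by simp [HWRel])
  · -- interpolation
    intro p q s hpq hqs v hvp hvs
    have hpq' : (p : ℕ) ≤ (q : ℕ) := hpq
    have hqs' : (q : ℕ) ≤ (s : ℕ) := hqs
    cases v with
    | a => exact hmema q
    | b => exact hmemb q
    | z t =>
      have h1 := (hmemz p t).1 hvp
      have h3 := (hmemz s t).1 hvs
      have m1 : (p : ℕ) / w ≤ (q : ℕ) / w := Nat.div_le_div_right hpq'
      have m3 : (q : ℕ) / w ≤ (s : ℕ) / w := Nat.div_le_div_right hqs'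
      exact (hmemz q t).2 (by omega)
    | u j i =>
      obtain ⟨hd1, hm1⟩ := (hmemu p j i).1 hvp
      obtain ⟨hd3, hm3⟩ := (hmemu s j i).1 hvs
      have e1 : w * ((p : ℕ) / w) + (p : ℕ) % w = (p : ℕ) := Nat.div_add_mod _ _
      have e3 : w * ((s : ℕ) / w) + (s : ℕ) % w = (s : ℕ) := Nat.div_add_mod _ _
      rw [← hd1] at e1
      rw [← hd3] at e3
      have hq : q = p ∨ q = s := by
        rw [Fin.ext_iff, Fin.ext_iff]
        omega
      rcases hq with rfl | rfl
      · exact hvp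
      · exact hvs
  · -- width
    intro k
    rw [hB]
    refine le_trans (Finset.card_insert_le _ _) (Nat.succ_le_succ ?_)
    refine le_trans (Finset.card_insert_le _ _) (Nat.succ_le_succ ?_)
    refine le_trans (Finset.card_insert_le _ _) (Nat.succ_le_succ ?_)
    refine le_trans (Finset.card_insert_le _ _) (Nat.succ_le_succ ?_)
    refine le_trans (Finset.card_insert_le _ _) (Nat.succ_le_succ ?_)
    simp
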